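/- Let R = ℂ[t, t^{−1}, u] / (u^2 − t^2 − 4t) and define D = (t+2)∂/∂u + u∂/∂t, which induces a well-defined derivation of R. Then with d_n = t^n u D and e_n = t^n D (n ∈ ℤ), in the Lie algebra Der(R) one has [e_m, e_n] = (n−m) d_{m+n−1}. -/

import Mathlib

set_option synthInstance.maxHeartbeats 1000000
set_option maxHeartbeats 1000000

open MvPolynomial in
/-- `R = ℂ[t, t⁻¹, u] / (u² − t² − 4t)`, modelled as `ℂ[x₀,x₁,x₂]` modulo the
ideal generated by `x₀x₁ − 1` (making `x₀ = t` invertible with inverse `x₁`)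
and `x₂² − x₀² − 4x₀`. -/
noncomputable abbrev R3 : Type :=
  MvPolynomial (Fin 3) ℂ ⧸
    Ideal.span {(X 0 * X 1 - 1 : MvPolynomial (Fin 3) ℂ), X 2 ^ 2 - X 0 ^ 2 - 4 * X 0}

open MvPolynomial in
/-- the class of `t` in `R`. -/
noncomputable def tR : R3 := Ideal.Quotient.mk _ (X 0)

open MvPolynomial in
/-- the class of `t⁻¹` in `R`. -/
noncomputable def tinv : R3 := Ideal.Quotient.mk _ (X 1)

open MvPolynomial in
/-- the class of `u` in `R`. -/
noncomputable def uR : R3 := Ideal.Quotient.mk _ (X 2)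

/-- integer powers `tⁿ` of the invertible element `t` of `R`. -/
noncomputable def tpow (n : ℤ) : R3 := if 0 ≤ n then tR ^ n.toNat else tinv ^ (-n).toNat

/-- `eR n = tⁿ D ∈ Der(R)` for a derivation `D`. -/
noncomputable def eR (D : Derivation ℂ R3 R3) (n : ℤ) : Derivation ℂ R3 R3 :=
  tpow n • D

/-- `dR n = tⁿ u D ∈ Der(R)` for a derivation `D`. -/
noncomputable def dR (D : Derivation ℂ R3 R3) (n : ℤ) : Derivation ℂ R3 R3 :=
  (tpow n * uR) • D

open MvPolynomial in
lemma tR_mul_tinv : tR * tinv = 1 := by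
  rw [tR, tinv, ← map_mul, ← sub_eq_zero, ← map_one (Ideal.Quotient.mk _), ← map_sub,
    Ideal.Quotient.eq_zero_iff_mem]
  exact Ideal.subset_span (Set.mem_insert _ _)

/-- `t` as a unit of `R3`. -/
noncomputable def Tu : R3ˣ :=
  ⟨tR, tinv, tR_mul_tinv, by rw [mul_comm]; exact tR_mul_tinv⟩

lemma tpow_eq (n : ℤ) : tpow n = ((Tu ^ n : R3ˣ) : R3) := by
  rcases le_or_gt 0 n with h | h
  · rw [tpow, if_pos h]
    obtain ⟨k, rfl⟩ : ∃ k : ℕ, n = k := ⟨n.toNat, by omega⟩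
    rw [zpow_natCast, Units.val_pow_eq_pow_val, Int.toNat_natCast]
    rfl
  · rw [tpow, if_neg (not_le.2 h)]
    obtain ⟨k, rfl⟩ : ∃ k : ℕ, n = -k := ⟨(-n).toNat, by omega⟩
    rw [neg_neg, Int.toNat_natCast, zpow_neg, zpow_natCast, ← inv_pow,
      Units.val_pow_eq_pow_val]
    rfl

lemma tpow_add (a b : ℤ) : tpow (a + b) = tpow a * tpow b := by
  rw [tpow_eq, tpow_eq, tpow_eq, zpow_add, Units.val_mul]

lemma tpow_zero' : tpow 0 = 1 := by simp [tpow]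

lemma tpow_one' : tpow 1 = tR := by simp [tpow]

lemma D_tinv (D : Derivation ℂ R3 R3) (hDt : D tR = uR) :
    D tinv = -(tinv ^ 2 * uR) := by
  have h0 : D (tR * tinv) = 0 := by rw [tR_mul_tinv]; exact D.map_one_eq_zero
  rw [D.leibniz, hDt, smul_eq_mul, smul_eq_mul] at h0
  have := congrArg (fun x => tinv * x) h0
  simp only [mul_add, mul_zero] at this
  have ht : tinv * (tR * D tinv) = D tinv := by
    rw [← mul_assoc, mul_comm tinv tR, tR_mul_tinv, one_mul]
  rw [ht] at this
  linear_combination this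

lemma D_tpow (D : Derivation ℂ R3 R3) (hDt : D tR = uR) (n : ℤ) :
    D (tpow n) = n • (tpow (n - 1) * uR) := by
  induction n using Int.induction_on with
  | zero => rw [tpow_zero']; simp [D.map_one_eq_zero]
  | succ k ih =>
      have h1 : tpow ((k : ℤ) + 1) = tpow k * tR := by
        rw [tpow_add, tpow_one']
      rw [h1, D.leibniz, hDt, smul_eq_mul, smul_eq_mul, ih]
      have h2 : tpow ((k : ℤ) - 1) * tR = tpow k := by
        rw [← tpow_one', ← tpow_add]; ring_nf
      have h3 : ((k : ℤ) + 1 - 1) = (k : ℤ) := by ring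
      rw [h3]
      simp only [smul_eq_mul, zsmul_eq_mul]
      push_cast
      linear_combination (((k : ℕ) : R3) * uR) * h2
  | pred k ih =>
      have h1 : tpow (-(k : ℤ) - 1) = tpow (-k) * tinv := by
        have : tpow (-(k : ℤ) - 1) = tpow (-(k:ℤ) + -1) := by ring_nf
        rw [this, tpow_add]
        congr 1
        show tpow (-1) = tinv
        simp [tpow]
      rw [h1, D.leibniz, D_tinv D hDt, smul_eq_mul, smul_eq_mul, ih]
      have h2 : tpow (-(k : ℤ) - 1) * tinv = tpow (-(k:ℤ) - 1 - 1) := by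
        have e : (-(k:ℤ) - 1 - 1) = (-(k:ℤ) - 1) + -1 := by ring
        rw [e, tpow_add]
        congr 1
        show tinv = tpow (-1)
        simp [tpow]
      have h3 : tpow (-(k : ℤ) - 1) * tinv = tpow (-(k:ℤ)) * tinv ^ 2 := by
        rw [h1]; ring
      simp only [smul_eq_mul, zsmul_eq_mul]
      push_cast
      linear_combination uR * h3 - ((((k : ℕ) : R3) + 1) * uR) * h2

/-- For any derivation `D` of `R` with `D t = u` and `D u = t + 2` (i.e. the
derivation `(t+2)∂ᵤ + u∂ₜ`), one has `[eₘ, eₙ] = (n − m) d_{m+n−1}` in `Der(R)`. -/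
theorem stmt14 (D : Derivation ℂ R3 R3) (hDt : D tR = uR) (hDu : D uR = tR + 2)
    (m n : ℤ) :
    ⁅eR D m, eR D n⁆ = (n - m) • dR D (m + n - 1) := by
  ext x
  have key : ∀ k : ℤ, D (tpow k) = k • (tpow (k - 1) * uR) := D_tpow D hDt
  rw [Derivation.commutator_apply]
  simp only [eR, dR, Derivation.smul_apply, smul_eq_mul]
  rw [D.leibniz, D.leibniz, key m, key n]
  simp only [smul_eq_mul]
  have hmn : tpow m * tpow (n - 1) = tpow (m + n - 1) := by
    rw [← tpow_add]; ring_nf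
  have hnm : tpow n * tpow (m - 1) = tpow (m + n - 1) := by
    rw [← tpow_add]; ring_nf
  simp only [smul_eq_mul, zsmul_eq_mul]
  push_cast
  linear_combination ((n : R3) * uR * D x) * hmn - ((m : R3) * uR * D x) * hnm
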